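/- Let A → R be a flat ring homomorphism of commutative Noetherian rings. Then every associated prime of R (as an R-module) is an associated prime of R/pR for some associated prime p of A (as an A-module). In particular, Ass_R(R) ⊆ ⋃_{p ∈ Ass_A(A)} Ass_R(R/pR). -/

import Mathlib

open TensorProduct

/-- If `M` is a flat `A`-module and `x : M` is killed by a finitely generated ideal `p`,
then `x = ∑ cᵢ • zᵢ` where each `cᵢ` annihilates `p`. -/
lemma flat_exists_rep {A : Type*} [CommRing A] {M : Type*} [AddCommGroup M] [Module A M]
    [Module.Flat A M] (p : Ideal A) (hfg : p.FG) (x : M) (hx : ∀ a ∈ p, a • x = 0) :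
    ∃ (n : ℕ) (c : Fin n → A) (z : Fin n → M),
      (∀ i, ∀ b ∈ p, c i * b = 0) ∧ x = ∑ i, c i • z i := by
  obtain ⟨s, hs⟩ := hfg
  set m := s.card with hm
  let e := s.equivFin
  let b : Fin m → A := fun i => ((e.symm i : ↥s) : A)
  have hbmem : ∀ i, b i ∈ p := by
    intro i
    rw [← hs]
    exact Submodule.subset_span (e.symm i).2
  -- the linear map `c ↦ (c * bᵢ)ᵢ`
  let φ : A →ₗ[A] (Fin m → A) := LinearMap.pi fun i => LinearMap.toSpanSingleton A A (b i)
  have hφ : ∀ (c : A) (i : Fin m), φ c i = c * b i := fun c i => by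
    simp [φ, LinearMap.toSpanSingleton, smul_eq_mul]
  have hker : ∀ c : A, φ c = 0 ↔ ∀ a ∈ p, c * a = 0 := by
    intro c
    constructor
    · intro h a ha
      rw [← hs] at ha
      induction ha using Submodule.span_induction with
      | mem y hy =>
          obtain ⟨i, hi⟩ : ∃ i, b i = y := ⟨e ⟨y, hy⟩, by simp [b]⟩
          rw [← hi]
          have := congrFun h i
          rwa [hφ, Pi.zero_apply] at this
      | zero => simp
      | add y z _ _ hy hz => rw [mul_add, hy, hz, add_zero]
      | smul r y _ hy => rw [smul_eq_mul, mul_left_comm, hy, mul_zero]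
    · intro h
      funext i
      rw [hφ, Pi.zero_apply]
      exact h _ (hbmem i)
  have hexact : Function.Exact ((LinearMap.ker φ).subtype.rTensor M) (φ.rTensor M) :=
    Module.Flat.rTensor_exact M (LinearMap.exact_subtype_ker_map φ)
  -- `1 ⊗ x` is killed by `φ ⊗ id`
  have hζ : φ.rTensor M ((TensorProduct.lid A M).symm x) = 0 := by
    rw [TensorProduct.lid_symm_apply, LinearMap.rTensor_tmul]
    have : ∀ y : (Fin m → A) ⊗[A] M, y = 0 ↔
        (TensorProduct.piRight A A M (fun _ : Fin m => A))
          ((TensorProduct.comm A _ M) y) = 0 := by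
      intro y
      constructor
      · rintro rfl; simp
      · intro h
        apply (TensorProduct.comm A _ M).injective
        apply (TensorProduct.piRight A A M (fun _ : Fin m => A)).injective
        simpa using h
    rw [this]
    funext i
    simp only [TensorProduct.comm_tmul, TensorProduct.piRight_apply,
      TensorProduct.piRightHom_tmul, Pi.zero_apply]
    have : (TensorProduct.rid A M) (x ⊗ₜ[A] (φ 1 i)) = 0 := by
      rw [TensorProduct.rid_tmul, hφ, one_mul]
      exact hx _ (hbmem i)
    have h0 : (TensorProduct.rid A M) 0 = 0 := map_zero _
    exact (TensorProduct.rid A M).injective (this.trans h0.symm)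
  obtain ⟨η, hη⟩ := (hexact _).mp hζ
  obtain ⟨S, hS⟩ := TensorProduct.exists_finset η
  have hxval : x = ∑ y ∈ S, ((y.1 : A) • y.2) := by
    have := congrArg (TensorProduct.lid A M) hη
    rw [LinearEquiv.apply_symm_apply] at this
    rw [← this, hS, map_sum, map_sum]
    refine Finset.sum_congr rfl fun y _ => ?_
    rw [LinearMap.rTensor_tmul, TensorProduct.lid_tmul]
    rfl
  refine ⟨S.card, fun i => ((S.equivFin.symm i : ↥S) : (↥(LinearMap.ker φ) × M)).1,
    fun i => ((S.equivFin.symm i : ↥S) : (↥(LinearMap.ker φ) × M)).2, ?_, ?_⟩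
  · intro i a ha
    have hmem := ((S.equivFin.symm i : ↥S) : (↥(LinearMap.ker φ) × M)).1.2
    rw [LinearMap.mem_ker] at hmem
    exact (hker _).mp hmem a ha
  · rw [hxval, ← Finset.sum_attach S (fun y => ((y.1 : A) • y.2))]
    exact Fintype.sum_equiv S.equivFin _ _ (fun y => by simp)


lemma exists_common_annihilator {D : Type*} [CommRing D] [IsDomain D]
    {N : Type*} [AddCommGroup N] [Module D N] (P : Submodule D N) (hP : P.FG)
    (hle : P ≤ Submodule.torsion D N) :
    ∃ t : D, t ≠ 0 ∧ ∀ w ∈ P, t • w = 0 := by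
  revert hle
  refine Submodule.fg_induction (R := D) (M := N)
    (motive := fun P _ => P ≤ Submodule.torsion D N → ∃ t : D, t ≠ 0 ∧ ∀ w ∈ P, t • w = 0) ?_ ?_ P hP
  · intro x hle
    obtain ⟨a, ha⟩ := (Submodule.mem_torsion_iff x).mp
      (hle (Submodule.mem_span_singleton_self x))
    refine ⟨(a : D), nonZeroDivisors.coe_ne_zero a, fun w hw => ?_⟩
    obtain ⟨r, rfl⟩ := Submodule.mem_span_singleton.mp hw
    rw [smul_comm, show ((a : D)) • x = 0 from ha, smul_zero]
  · intro P Q _ _ hP hQ hle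
    obtain ⟨t₁, ht₁, h₁⟩ := hP (le_trans le_sup_left hle)
    obtain ⟨t₂, ht₂, h₂⟩ := hQ (le_trans le_sup_right hle)
    refine ⟨t₁ * t₂, mul_ne_zero ht₁ ht₂, fun w hw => ?_⟩
    obtain ⟨w₁, hw₁, w₂, hw₂, rfl⟩ := Submodule.mem_sup.mp hw
    rw [smul_add, mul_smul, mul_smul, smul_comm t₁ t₂ w₁, h₁ w₁ hw₁, h₂ w₂ hw₂, smul_zero,
      smul_zero, add_zero]

/-- Over a Noetherian domain, any finite module admits a map to a finite free module whose
kernel is killed by a single nonzero element. -/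
lemma exists_almost_embedding_free (D : Type*) [CommRing D] [IsDomain D] [IsNoetherianRing D]
    (N : Type*) [AddCommGroup N] [Module D N] [Module.Finite D N] :
    ∃ (k : ℕ) (g : N →ₗ[D] (Fin k → D)) (t : D), t ≠ 0 ∧ ∀ w : N, g w = 0 → t • w = 0 := by
  obtain ⟨t, ht0, ht⟩ := exists_common_annihilator (Submodule.torsion D N)
    (IsNoetherian.noetherian _) le_rfl
  set K := FractionRing D
  set NK := LocalizedModule (nonZeroDivisors D) N
  have : Module.Finite K NK :=
    Module.Finite.of_isLocalizedModule (nonZeroDivisors D)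
      (LocalizedModule.mkLinearMap (nonZeroDivisors D) N)
  set k := Module.finrank K NK with hk
  let bK : Module.Basis (Fin k) K NK := Module.finBasis K NK
  let h : N →ₗ[D] (Fin k → K) :=
    (bK.equivFun.toLinearMap.restrictScalars D) ∘ₗ LocalizedModule.mkLinearMap (nonZeroDivisors D) N
  have hker : ∀ w : N, h w = 0 → t • w = 0 := by
    intro w hw
    have : LocalizedModule.mkLinearMap (nonZeroDivisors D) N w = 0 := by
      have hw' : bK.equivFun ((LocalizedModule.mkLinearMap (nonZeroDivisors D) N) w) = 0 := hw
      exact (LinearEquiv.map_eq_zero_iff _).mp hw'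
    rw [LocalizedModule.mkLinearMap_apply] at this
    rw [show (0 : NK) = LocalizedModule.mk 0 1 from (LocalizedModule.zero_mk 1).symm,
      LocalizedModule.mk_eq] at this
    obtain ⟨u, hu⟩ := this
    apply ht
    rw [Submodule.mem_torsion_iff]
    refine ⟨u, ?_⟩
    simpa using hu
  -- common denominator for images of generators
  obtain ⟨sN, hsN⟩ := Module.Finite.fg_top (R := D) (M := N)
  obtain ⟨d, hd⟩ := IsLocalization.exist_integer_multiples (nonZeroDivisors D)
    (sN ×ˢ (Finset.univ : Finset (Fin k))) (fun y => h y.1 y.2)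
  let g₀ : N →ₗ[D] (Fin k → K) := (d : D) • h
  let ℓ : (Fin k → D) →ₗ[D] (Fin k → K) :=
    LinearMap.pi fun j => (Algebra.linearMap D K) ∘ₗ LinearMap.proj j
  have hℓinj : Function.Injective ℓ := by
    intro u v huv
    funext j
    exact IsFractionRing.injective D K (congrFun huv j)
  have hrange : ∀ w : N, g₀ w ∈ LinearMap.range ℓ := by
    have : (⊤ : Submodule D N) ≤ (LinearMap.range ℓ).comap g₀ := by
      rw [← hsN, Submodule.span_le]
      intro y hy
      have hint : ∀ j : Fin k, ∃ c : D, algebraMap D K c = (d : D) • h y j := by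
        intro j
        have := hd (y, j) (Finset.mem_product.mpr ⟨hy, Finset.mem_univ j⟩)
        obtain ⟨c, hc⟩ := this
        exact ⟨c, by simpa [Algebra.smul_def] using hc⟩
      refine Submodule.mem_comap.mpr ⟨fun j => (hint j).choose, ?_⟩
      funext j
      simp only [ℓ, LinearMap.pi_apply, LinearMap.comp_apply, LinearMap.proj_apply,
        Algebra.linearMap_apply]
      rw [(hint j).choose_spec]
      simp [g₀]
    exact fun w => this (Submodule.mem_top)
  let e : (Fin k → D) ≃ₗ[D] LinearMap.range ℓ := LinearEquiv.ofInjective ℓ hℓinj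
  refine ⟨k, e.symm.toLinearMap ∘ₗ (g₀.codRestrict (LinearMap.range ℓ) hrange), t, ht0, ?_⟩
  intro w hw
  have h1 : g₀.codRestrict (LinearMap.range ℓ) hrange w = 0 := by
    have := congrArg e hw
    simpa using this
  have h2 : g₀ w = 0 := by
    have := congrArg (Subtype.val) h1
    simpa using this
  have h3 : h w = 0 := by
    funext j
    have := congrFun h2 j
    simp only [g₀, LinearMap.smul_apply, Pi.smul_apply, Pi.zero_apply] at this ⊢
    have hd0 : algebraMap D K (d : D) ≠ 0 :=
      IsFractionRing.to_map_ne_zero_of_mem_nonZeroDivisors d.2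
    rw [Algebra.smul_def] at this
    rcases mul_eq_zero.mp this with h | h
    · exact absurd h hd0
    · exact h
  exact hker w h3

/-- Step 1: if `x` is an element of a flat module whose annihilator is a prime `p`, then
`p` is an associated prime of the (Noetherian) base ring. -/
lemma isAssociatedPrime_of_flat_elem {A : Type*} [CommRing A] [IsNoetherianRing A]
    {R : Type*} [AddCommGroup R] [Module A R] [Module.Flat A R]
    (p : Ideal A) (hp : p.IsPrime) (x : R) (hcom : ∀ a : A, a • x = 0 ↔ a ∈ p) :
    p ∈ associatedPrimes A A := by
  classical
  set S := p.primeCompl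
  set A' := Localization.AtPrime p with hA'
  set R' := LocalizedModule S R with hR'
  haveI : IsNoetherianRing A' := IsLocalization.isNoetherianRing S A' inferInstance
  set m : Ideal A' := p.map (algebraMap A A') with hm
  have hcomap : m.comap (algebraMap A A') = p :=
    IsLocalization.comap_map_of_isPrime_disjoint S A' hp
      (Set.disjoint_left.mpr fun a ha => ha)
  set x' : R' := LocalizedModule.mk x 1 with hx'
  have key : ∀ (a : A) (s : S), (Localization.mk a s) • x' = 0 ↔ a ∈ p := by
    intro a s
    rw [hx', LocalizedModule.mk_smul_mk,
      show (0 : R') = LocalizedModule.mk 0 1 from (LocalizedModule.zero_mk 1).symm,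
      LocalizedModule.mk_eq]
    constructor
    · rintro ⟨u, hu⟩
      simp only [smul_zero, one_smul] at hu
      have : ((u : A) * a) • x = 0 := by
        rw [mul_smul]
        exact hu
      have := (hcom _).mp this
      rcases hp.mem_or_mem this with h | h
      · exact absurd h u.2
      · exact h
    · intro ha
      refine ⟨1, ?_⟩
      simp only [smul_zero, one_smul]
      exact (hcom a).mpr ha
  have keymem : ∀ (a : A) (s : S), (Localization.mk a s ∈ m ↔ a ∈ p) := by
    intro a s
    rw [Localization.mk_eq_mk', IsLocalization.mk'_mem_iff, ← hcomap, Ideal.mem_comap]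
  have hx0 : ∀ a' ∈ m, a' • x' = 0 := by
    intro a' ha'
    induction a' using Localization.induction_on with
    | _ y =>
      exact (key y.1 y.2).mpr ((keymem y.1 y.2).mp ha')
  obtain ⟨n, c, z, hc, hxz⟩ := flat_exists_rep m (IsNoetherian.noetherian m) x' hx0
  have hx'0 : x' ≠ 0 := by
    intro h0
    have := (key 1 1).mp (by rw [h0, smul_zero])
    exact hp.ne_top (Ideal.eq_top_of_isUnit_mem p this isUnit_one)
  have hex : ∃ i, c i ≠ 0 := by
    by_contra hno
    push_neg at hno
    apply hx'0
    rw [hxz]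
    refine Finset.sum_eq_zero fun i _ => ?_
    rw [hno i, zero_smul]
  obtain ⟨i0, hi0⟩ := hex
  set c' := c i0 with hc'
  -- the annihilator of c' in A' is m
  have hannc' : (Submodule.span A' {c'}).annihilator = m := by
    haveI : IsLocalRing A' := Localization.AtPrime.isLocalRing p
    have h1 : m ≤ (Submodule.span A' {c'}).annihilator := by
      intro b hb
      rw [Submodule.mem_annihilator_span_singleton, smul_eq_mul, mul_comm]
      exact hc i0 b hb
    have h2 : (Submodule.span A' {c'}).annihilator ≠ ⊤ := by
      intro h
      apply hi0
      have : (1 : A') ∈ (Submodule.span A' {c'}).annihilator := h ▸ Submodule.mem_top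
      rw [Submodule.mem_annihilator_span_singleton, one_smul] at this
      exact this
    have h3 := IsLocalRing.le_maximalIdeal h2
    rw [← Localization.AtPrime.map_eq_maximalIdeal] at h3
    exact le_antisymm h3 h1
  -- descend to A
  obtain ⟨⟨a₀, s₀⟩, hc'eq⟩ := IsLocalization.mk'_surjective S c'
  have hc'eq : IsLocalization.mk' A' a₀ s₀ = c' := hc'eq
  obtain ⟨sB, hsB⟩ := IsNoetherian.noetherian p
  have hgen : ∀ b ∈ sB, ∃ u : S, (u : A) * (a₀ * b) = 0 := by
    intro b hb
    have hbp : b ∈ p := by rw [← hsB]; exact Submodule.subset_span hb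
    have : c' * algebraMap A A' b = 0 := by
      have hbm : algebraMap A A' b ∈ m := Ideal.mem_map_of_mem _ hbp
      have h4 : algebraMap A A' b ∈ (Submodule.span A' {c'}).annihilator := hannc'.symm ▸ hbm
      rw [Submodule.mem_annihilator_span_singleton, smul_eq_mul] at h4
      rw [mul_comm]
      exact h4
    rw [← hc'eq, ← IsLocalization.mk'_one (M := S) A' b, ← IsLocalization.mk'_mul,
      mul_one] at this
    exact (IsLocalization.mk'_eq_zero_iff _ _).mp this
  choose u hu using hgen
  set T : S := ∏ b ∈ sB.attach, u b.1 b.2 with hT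
  refine isAssociatedPrime_iff.mpr ⟨hp, (T : A) * a₀, ?_⟩
  rw [Submodule.bot_colon']
  ext d
  rw [Submodule.mem_annihilator_span_singleton, smul_eq_mul]
  constructor
  · -- d ∈ p → d * (T * a₀) = 0
    intro hd
    rw [← hsB] at hd
    obtain ⟨f, -, hf⟩ := Submodule.mem_span_finset.mp hd
    rw [← hf, Finset.sum_mul]
    refine Finset.sum_eq_zero fun b hb => ?_
    have : T = (∏ b' ∈ sB.attach.erase ⟨b, hb⟩, u b'.1 b'.2) * u b hb := by
      rw [hT, Finset.prod_erase_mul]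
      exact Finset.mem_attach _ _
    have hTb : ((T : A)) * a₀ * b = 0 := by
      have h5 := congrArg (Submonoid.subtype S) this
      simp only [Submonoid.coe_subtype, Submonoid.coe_mul] at h5
      calc (T : A) * a₀ * b
          = ((∏ b' ∈ sB.attach.erase ⟨b, hb⟩, u b'.1 b'.2 : S) : A) *
              ((u b hb : A) * (a₀ * b)) := by rw [h5]; ring
        _ = 0 := by rw [hu b hb, mul_zero]
    rw [smul_eq_mul]
    calc f b • b * ((T:A) * a₀) = f b * ((T:A) * a₀ * b) := by rw [smul_eq_mul]; ring
      _ = 0 := by rw [hTb, mul_zero]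
  · -- converse
    intro hd
    have : algebraMap A A' (d * (T : A)) • c' = 0 := by
      rw [smul_eq_mul, ← hc'eq, ← IsLocalization.mk'_one (M := S) A' (d * (T:A)),
        ← IsLocalization.mk'_mul, one_mul]
      have : d * (T : A) * a₀ = 0 := by rw [mul_assoc]; exact hd
      rw [this, IsLocalization.mk'_zero]
    have hmem : algebraMap A A' (d * (T:A)) ∈ m := by
      rw [← hannc', Submodule.mem_annihilator_span_singleton]
      exact this
    have : d * (T : A) ∈ p := by rw [← hcomap]; exact hmem
    rcases hp.mem_or_mem this with h | h
    · exact h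
    · exact absurd h T.2

set_option maxHeartbeats 1000000 in
set_option synthInstance.maxHeartbeats 400000 in
/-- Step 2 -/
lemma step2 {A : Type*} [CommRing A] [IsNoetherianRing A]
    {R : Type*} [CommRing R] [Algebra A R] [Module.Flat A R]
    (q : Ideal R) (hq : q.IsPrime) (x : R) (hxq : q = (Submodule.span R {x}).annihilator)
    (p : Ideal A) (hp : p.IsPrime) (hcom : ∀ a : A, a • x = 0 ↔ a ∈ p) :
    q ∈ associatedPrimes R (R ⧸ p.map (algebraMap A R)) := by
  classical
  set D := A ⧸ p with hD
  set pR := p.map (algebraMap A R) with hpR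
  set J : Ideal A := Submodule.annihilator p with hJ
  -- J is killed by p, so it is a D-module
  have hTor : Module.IsTorsionBySet A ↥J (p : Set A) := by
    intro w a
    apply Subtype.ext
    have hmul := Submodule.mem_annihilator.mp w.2 (a : A) a.2
    rw [smul_eq_mul] at hmul
    simp only [SetLike.val_smul, ZeroMemClass.coe_zero, smul_eq_mul, mul_comm]
    exact hmul
  letI : Module D ↥J := hTor.module
  haveI : IsScalarTower A D ↥J := hTor.isScalarTower
  haveI : Module.Finite A ↥J := Module.Finite.iff_fg.mpr (IsNoetherian.noetherian J)
  haveI : Module.Finite D ↥J := by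
    obtain ⟨sJ, hsJ⟩ := Module.Finite.fg_top (R := A) (M := ↥J)
    refine (Module.finite_def (R := D) (M := ↥J)).mpr ⟨sJ, ?_⟩
    rw [eq_top_iff]
    intro w _
    have hw : w ∈ Submodule.span A (sJ : Set ↥J) := hsJ ▸ Submodule.mem_top
    have hle : Submodule.span A (sJ : Set ↥J) ≤
        (Submodule.span D (sJ : Set ↥J)).restrictScalars A :=
      Submodule.span_le.mpr fun y hy => Submodule.subset_span hy
    exact hle hw
  obtain ⟨k, g, tbar, htbar, hg⟩ := exists_almost_embedding_free D ↥J
  obtain ⟨t, rfl⟩ := Ideal.Quotient.mk_surjective tbar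
  have ht : t ∉ p := fun h => htbar (Ideal.Quotient.eq_zero_iff_mem.mpr h)
  set G : ↥J →ₗ[A] (Fin k → D) := g.restrictScalars A with hG
  have hGker : ∀ w : ↥(LinearMap.ker G), t • w = 0 := by
    intro w
    have h1 : g w.1 = 0 := w.2
    have h2 : Ideal.Quotient.mk p t • (w.1 : ↥J) = 0 := hg _ h1
    rw [hTor.mk_smul] at h2
    exact Subtype.ext h2
  -- representation of x
  obtain ⟨n, c, z, hc, hxz⟩ := flat_exists_rep p (IsNoetherian.noetherian p) x
    (fun a ha => (hcom a).mpr ha)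
  have hcJ : ∀ i, c i ∈ J := fun i => Submodule.mem_annihilator.mpr fun b hb => by
    rw [smul_eq_mul]; exact hc i b hb
  set w : Fin n → ↥J := fun i => ⟨c i, hcJ i⟩ with hw
  set ξ : ↥J ⊗[A] R := ∑ i, w i ⊗ₜ z i with hξ
  -- the injection θ : J ⊗ R → R
  set θ : ↥J ⊗[A] R →ₗ[A] R :=
    (TensorProduct.lid A R).toLinearMap ∘ₗ ((J : Submodule A A).subtype.rTensor R) with hθ
  have hθinj : Function.Injective θ := by
    apply Function.Injective.comp (TensorProduct.lid A R).injective
    exact Module.Flat.rTensor_preserves_injective_linearMap _ (Submodule.injective_subtype _)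
  have hθtmul : ∀ (a : ↥J) (y : R), θ (a ⊗ₜ y) = (a : A) • y := by
    intro a y
    simp [hθ]
  have hθξ : θ ξ = x := by
    rw [hξ, map_sum, hxz]
    exact Finset.sum_congr rfl fun i _ => hθtmul _ _
  -- the comparison map F
  set eD : R ⊗[A] D ≃ₗ[A] (R ⧸ pR) :=
    (TensorProduct.tensorQuotEquivQuotSMul R p) ≪≫ₗ
    (Submodule.quotEquivOfEq _ _ (Ideal.smul_top_eq_map p)) ≪≫ₗ
    (Submodule.Quotient.restrictScalarsEquiv A pR) with heD
  have heDtmul : ∀ (y : R) (a : A),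
      eD (y ⊗ₜ (Ideal.Quotient.mk p a)) = Ideal.Quotient.mk pR (a • y) := by
    intro y a
    simp only [heD, LinearEquiv.trans_apply]
    rw [TensorProduct.tensorQuotEquivQuotSMul_tmul_mk]
    rfl
  set piE : R ⊗[A] (Fin k → D) ≃ₗ[A] (Fin k → R ⊗[A] D) :=
    TensorProduct.piRight A A R (fun _ : Fin k => D) with hpiE
  set cE : ((Fin k → D) ⊗[A] R) ≃ₗ[A] (R ⊗[A] (Fin k → D)) :=
    TensorProduct.comm A _ _ with hcE
  set F : ((Fin k → D) ⊗[A] R) →ₗ[A] (Fin k → R ⧸ pR) :=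
    (LinearMap.pi fun j => eD.toLinearMap ∘ₗ LinearMap.proj j) ∘ₗ
      piE.toLinearMap ∘ₗ cE.toLinearMap with hF
  have hFval : ∀ (u : Fin k → D) (y : R) (j : Fin k) (a : A),
      Ideal.Quotient.mk p a = u j → F (u ⊗ₜ y) j = Ideal.Quotient.mk pR (a • y) := by
    intro u y j a ha
    simp only [hF, LinearMap.comp_apply, LinearMap.pi_apply, LinearEquiv.coe_coe,
      LinearMap.proj_apply]
    rw [hcE]
    rw [TensorProduct.comm_tmul]
    rw [hpiE, TensorProduct.piRight_apply, TensorProduct.piRightHom_tmul]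
    have hgoal : eD (y ⊗ₜ[A] u j) = Ideal.Quotient.mk pR (a • y) := by
      rw [← ha]; exact heDtmul y a
    exact hgoal
  have hFinj : ∀ ζ, F ζ = 0 → ζ = 0 := by
    intro ζ hζ
    have h1 : piE (cE ζ) = 0 := by
      funext j
      have hj := congrFun hζ j
      simp only [hF, LinearMap.comp_apply, LinearMap.pi_apply, LinearEquiv.coe_coe,
        LinearMap.proj_apply, Pi.zero_apply] at hj
      exact eD.map_eq_zero_iff.mp hj
    exact cE.map_eq_zero_iff.mp (piE.map_eq_zero_iff.mp h1)
  set Φ : ↥J ⊗[A] R →ₗ[A] (Fin k → R ⧸ pR) := F ∘ₗ (G.rTensor R) with hΦ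
  set v : Fin k → R ⧸ pR := Φ ξ with hv
  -- Φ intertwines multiplication by r
  have hsmul : ∀ (r : R) (ζ : ↥J ⊗[A] R),
      Φ ((LinearMap.lTensor ↥J (LinearMap.mulLeft A r)) ζ) = r • Φ ζ := by
    intro r ζ
    induction ζ using TensorProduct.induction_on with
    | zero => rw [map_zero, map_zero, smul_zero]
    | add ζ₁ ζ₂ h₁ h₂ => rw [map_add, map_add, map_add, h₁, h₂, smul_add]
    | tmul a y =>
      rw [LinearMap.lTensor_tmul]
      funext j
      obtain ⟨b, hb⟩ := Ideal.Quotient.mk_surjective (G a j)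
      have e1 : Φ (a ⊗ₜ (LinearMap.mulLeft A r y)) j = Ideal.Quotient.mk pR (b • (r * y)) := by
        rw [hΦ, LinearMap.comp_apply, LinearMap.rTensor_tmul]
        exact hFval _ _ _ _ hb
      have e2 : Φ (a ⊗ₜ y) j = Ideal.Quotient.mk pR (b • y) := by
        rw [hΦ, LinearMap.comp_apply, LinearMap.rTensor_tmul]
        exact hFval _ _ _ _ hb
      have hkey : ∀ u ww : R, u • (Ideal.Quotient.mk pR ww) = Ideal.Quotient.mk pR (u * ww) := by
        intro u ww
        rw [Algebra.smul_def (A := R ⧸ pR), Ideal.Quotient.algebraMap_eq, ← map_mul]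
      rw [e1, Pi.smul_apply, e2, hkey]
      congr 1
      rw [Algebra.smul_def, Algebra.smul_def, mul_left_comm]
  -- claim (a): q kills v
  have hqv : ∀ r ∈ q, r • v = 0 := by
    intro r hr
    have hrx : r * x = 0 := by
      have := hxq ▸ hr
      rwa [Submodule.mem_annihilator_span_singleton, smul_eq_mul] at this
    have hζ0 : (LinearMap.lTensor ↥J (LinearMap.mulLeft A r)) ξ = 0 := by
      apply hθinj
      rw [map_zero, hξ, map_sum, map_sum]
      have : ∀ i : Fin n, θ ((LinearMap.lTensor ↥J (LinearMap.mulLeft A r)) (w i ⊗ₜ z i))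
          = r * (c i • z i) := by
        intro i
        rw [LinearMap.lTensor_tmul, hθtmul]
        show (c i : A) • (r * z i) = r * (c i • z i)
        rw [Algebra.smul_def, Algebra.smul_def, mul_left_comm]
      rw [Finset.sum_congr rfl fun i _ => this i, ← Finset.mul_sum, ← hxz, hrx]
    rw [← hsmul r ξ, hζ0, map_zero]
  -- claim (b)
  have hvq : ∀ r : R, r • v = 0 → r ∈ q := by
    intro r hrv
    have h1 : Φ ((LinearMap.lTensor ↥J (LinearMap.mulLeft A r)) ξ) = 0 := by
      rw [hsmul r ξ, ← hv, hrv]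
    rw [hΦ, LinearMap.comp_apply] at h1
    have hG0 := hFinj _ h1
    have hexact : Function.Exact ((LinearMap.ker G).subtype.rTensor R) (G.rTensor R) :=
      Module.Flat.rTensor_exact R (LinearMap.exact_subtype_ker_map G)
    obtain ⟨η, hη⟩ := (hexact ((LinearMap.lTensor ↥J (LinearMap.mulLeft A r)) ξ)).mp hG0
    have hkill : ∀ η' : ↥(LinearMap.ker G) ⊗[A] R, t • η' = 0 := by
      intro η'
      induction η' using TensorProduct.induction_on with
      | zero => rw [smul_zero]
      | add η₁ η₂ h₁ h₂ => rw [smul_add, h₁, h₂, add_zero]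
      | tmul a y =>
        rw [TensorProduct.smul_tmul', hGker a, TensorProduct.zero_tmul]
    have hηt : t • η = 0 := hkill η
    have htξ : t • (LinearMap.lTensor ↥J (LinearMap.mulLeft A r)) ξ = 0 := by
      rw [← hη, ← map_smul, hηt, map_zero]
    have : t • (r * x) = 0 := by
      have := congrArg θ htξ
      rw [map_smul, map_zero] at this
      have hθrξ : θ ((LinearMap.lTensor ↥J (LinearMap.mulLeft A r)) ξ) = r * x := by
        rw [hξ, map_sum, map_sum]
        have hterm : ∀ i : Fin n, θ ((LinearMap.lTensor ↥J (LinearMap.mulLeft A r)) (w i ⊗ₜ z i))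
            = r * (c i • z i) := by
          intro i
          rw [LinearMap.lTensor_tmul, hθtmul]
          show (c i : A) • (r * z i) = r * (c i • z i)
          rw [Algebra.smul_def, Algebra.smul_def, mul_left_comm]
        rw [Finset.sum_congr rfl fun i _ => hterm i, ← Finset.mul_sum, ← hxz]
      rwa [hθrξ] at this
    have h2 : (algebraMap A R t * r) • x = 0 := by
      rw [smul_eq_mul, mul_assoc, ← Algebra.smul_def, this]
    have h3 : algebraMap A R t * r ∈ q := by
      rw [hxq, Submodule.mem_annihilator_span_singleton]
      exact h2
    rcases hq.mem_or_mem h3 with h | h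
    · exfalso
      apply ht
      apply (hcom t).mp
      rw [Algebra.smul_def]
      have : algebraMap A R t • x = 0 := by
        have := hxq ▸ h
        rwa [Submodule.mem_annihilator_span_singleton] at this
      rwa [smul_eq_mul] at this
    · exact h
  -- conclude
  set W : Fin k → Ideal R := fun j => (Submodule.span R {v j}).annihilator with hW
  have hqW : ∀ j, q ≤ W j := by
    intro j r hr
    rw [hW, Submodule.mem_annihilator_span_singleton]
    have := congrFun (hqv r hr) j
    rwa [Pi.smul_apply, Pi.zero_apply] at this
  have hWq : Finset.univ.inf W ≤ q := by
    intro r hr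
    apply hvq
    funext j
    have hle : Finset.univ.inf W ≤ W j := Finset.inf_le (Finset.mem_univ j)
    have hj : r ∈ W j := hle hr
    rw [hW, Submodule.mem_annihilator_span_singleton] at hj
    rw [Pi.smul_apply, Pi.zero_apply]
    exact hj
  have hprod : Finset.univ.prod W ≤ q := le_trans Ideal.prod_le_inf hWq
  obtain ⟨j, _, hWj⟩ := (Ideal.IsPrime.prod_le hq).mp hprod
  have hqj : q = W j := le_antisymm (hqW j) hWj
  refine ⟨hq, v j, ?_⟩
  rw [Submodule.bot_colon']
  change q = (W j).radical
  rw [← hqj, hq.radical]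


/-- If `A → R` is a flat homomorphism of commutative Noetherian rings, then every
associated prime of `R` (as an `R`-module) is an associated prime of `R/pR` for some associated
prime `p` of `A`. -/
theorem associatedPrimes_of_flat
    (A R : Type*) [CommRing A] [CommRing R]
    [IsNoetherianRing A] [IsNoetherianRing R]
    [Algebra A R] [Module.Flat A R] :
    ∀ q ∈ associatedPrimes R R, ∃ p ∈ associatedPrimes A A,
      q ∈ associatedPrimes R (R ⧸ Ideal.map (algebraMap A R) p) := by
  intro q hq
  obtain ⟨hqp, x, hx⟩ := isAssociatedPrime_iff.mp hq
  rw [Submodule.bot_colon'] at hx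
  set p : Ideal A := q.comap (algebraMap A R) with hpdef
  have hp : p.IsPrime := hqp.comap (algebraMap A R)
  have hcom : ∀ a : A, a • x = 0 ↔ a ∈ p := by
    intro a
    rw [hpdef, Ideal.mem_comap, hx, Submodule.mem_annihilator_span_singleton, smul_eq_mul,
      ← Algebra.smul_def]
  refine ⟨p, isAssociatedPrime_of_flat_elem p hp x hcom, step2 q hqp x hx p hp hcom⟩
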